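/- Let (G, X) be a minimal flow that is universal among minimal G-flows (every minimal G-flow is a factor of it) and coalescent (every endomorphism of (G,X) is an automorphism). Suppose G is not extremely amenable (X is not a singleton). If t ∈ G is such that the closed subgroup generated by {a(t) : a ∈ Aut(G)} equals G, then the action of t on X is not the identity map. -/

import Mathlib

universe u v

def IsMinimalFlow (G X : Type*) [Group G] [TopologicalSpace X] [MulAction G X] : Prop :=
  ∀ x : X, Dense (Set.range fun g : G => g • x)

/-- A topological (bicontinuous) automorphism of a topological group. -/
def IsTopAut {G : Type*} [Group G] [TopologicalSpace G] (a : G ≃* G) : Prop :=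
  Continuous a ∧ Continuous a.symm

/-- The `Aut(G)`-orbit of an element `t`. -/
def autOrbit (G : Type*) [Group G] [TopologicalSpace G] (t : G) : Set G :=
  {g : G | ∃ a : G ≃* G, IsTopAut a ∧ a t = g}

/-- The twisted action `g • x := a g • x`. -/
def twistAction (G X : Type*) [Group G] [MulAction G X] (a : G ≃* G) : MulAction G X where
  smul g x := a g • x
  one_smul x := by show a 1 • x = x; simp
  mul_smul g h x := by show a (g * h) • x = a g • a h • x; simp [mul_smul]

theorem twistContinuous (G X : Type*) [Group G] [TopologicalSpace G] [TopologicalSpace X]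
    [MulAction G X] [ContinuousSMul G X] (a : G ≃* G) (ha : Continuous a) :
    @ContinuousSMul G X (twistAction G X a).toSMul _ _ := by
  exact @ContinuousSMul.mk G X (twistAction G X a).toSMul _ _
    ((ha.comp continuous_fst).smul continuous_snd)

theorem twistMinimal (G X : Type*) [Group G] [TopologicalSpace X]
    [MulAction G X] (a : G ≃* G) (hmin : IsMinimalFlow G X) :
    @IsMinimalFlow G X _ _ (twistAction G X a) := by
  intro x
  have : (Set.range fun g : G => a g • x) = Set.range fun g : G => g • x := by
    ext y
    constructor
    · rintro ⟨g, rfl⟩; exact ⟨a g, rfl⟩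
    · rintro ⟨g, rfl⟩; exact ⟨a.symm g, by simp⟩
  show Dense (Set.range fun g : G => a g • x)
  rw [this]; exact hmin x

theorem universal_minimal_coalescent_effective
    (G : Type u) (X : Type v) [Group G] [TopologicalSpace G] [IsTopologicalGroup G]
    [TopologicalSpace X] [CompactSpace X] [T2Space X]
    [MulAction G X] [ContinuousSMul G X]
    (hmin : IsMinimalFlow G X)
    -- universality: every minimal G-flow is a factor of (G, X)
    (huniv : ∀ (Y : Type v) [TopologicalSpace Y] [CompactSpace Y] [T2Space Y]
      [MulAction G Y] [ContinuousSMul G Y], IsMinimalFlow G Y →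
      ∃ f : X → Y, Continuous f ∧ Function.Surjective f ∧
        ∀ (g : G) (x : X), f (g • x) = g • f x)
    -- coalescence: every endomorphism of (G, X) is an automorphism
    (hcoal : ∀ f : X → X, Continuous f → (∀ (g : G) (x : X), f (g • x) = g • f x) →
      Function.Bijective f)
    -- G is not extremely amenable: X is not a singleton
    (hnontriv : ∃ x y : X, x ≠ y)
    (t : G)
    (ht : (Subgroup.closure (autOrbit G t)).topologicalClosure = ⊤) :
    ∃ x : X, t • x ≠ x := by
  by_contra h
  push_neg at h
  -- Every element of autOrbit G t acts trivially.
  have key : ∀ g ∈ autOrbit G t, ∀ x : X, g • x = x := by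
    rintro g ⟨a, ⟨hac, hasc⟩, rfl⟩ x
    obtain ⟨f, hfc, hfs, hfe⟩ := @huniv X _ _ _ (twistAction G X a)
      (twistContinuous G X a hac) (twistMinimal G X a hmin)
    obtain ⟨z, rfl⟩ := hfs x
    have := hfe t z
    rw [h z] at this
    exact this.symm
  -- The fixing subgroup is closed.
  let S : Subgroup G :=
    { carrier := {g : G | ∀ x : X, g • x = x}
      one_mem' := fun x => one_smul G x
      mul_mem' := fun {g₁ g₂} h1 h2 x => by rw [mul_smul, h2, h1]
      inv_mem' := fun {g} hg x => by
        conv_lhs => rw [← hg x]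
        rw [← mul_smul, inv_mul_cancel, one_smul] }
  have hSclosed : IsClosed (S : Set G) := by
    have : (S : Set G) = ⋂ x : X, {g : G | g • x = x} := by
      ext g; simp [S, Set.mem_iInter]
    rw [this]
    exact isClosed_iInter fun x =>
      isClosed_eq ((continuous_id.smul continuous_const)) continuous_const
  have hle : Subgroup.closure (autOrbit G t) ≤ S :=
    (Subgroup.closure_le S).mpr key
  have hle2 : (Subgroup.closure (autOrbit G t)).topologicalClosure ≤ S :=
    Subgroup.topologicalClosure_minimal _ hle hSclosed
  rw [ht] at hle2
  -- So every g acts trivially; orbits are singletons, contradiction with density.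
  obtain ⟨x, y, hxy⟩ := hnontriv
  have hd := hmin x
  have : (Set.range fun g : G => g • x) = {x} := by
    ext z
    constructor
    · rintro ⟨g, rfl⟩; exact hle2 (Subgroup.mem_top g) x
    · rintro rfl; exact ⟨1, one_smul G _⟩
  rw [this] at hd
  have hy : y ∈ closure ({x} : Set X) := hd y
  rw [closure_singleton] at hy
  exact hxy (hy.symm)
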